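/- Let D = D_H be the binary normal delta-matroid of a graph H (loops allowed). Then there exists a sequence (v₁,…,v_k) of mutually distinct elements such that {v₁,…,v_i} ∈ S for all 0 ≤ i ≤ k and {v₁,…,v_k} is a maximal member of S, if and only if every even connected summand of D with nonempty ground set is of the form ({v}, {∅}) for some single element v. -/

import Mathlib

open Matrix

variable {V : Type*} [Fintype V] [DecidableEq V] {U : Type*} [DecidableEq U]

/-- A set system: a finite ground set together with a family of subsets. -/
structure SetSystem (U : Type*) [DecidableEq U] where
  ground : Finset U
  sets : Set (Finset U)

/-- The direct sum of two set systems (to be used with disjoint ground sets). -/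
def SetSystem.directSum (D₁ D₂ : SetSystem U) : SetSystem U :=
  ⟨D₁.ground ∪ D₂.ground, {Z | ∃ X₁ ∈ D₁.sets, ∃ X₂ ∈ D₂.sets, Z = X₁ ∪ X₂}⟩

/-- `D'` is a summand of `D`: `D = D' ⊕ D''` for some set system `D''` with ground
set disjoint from that of `D'` (members of each summand lying in its ground set). -/
def SetSystem.Summand (D' D : SetSystem U) : Prop :=
  ∃ D'' : SetSystem U, Disjoint D'.ground D''.ground ∧
    (∀ Z ∈ D'.sets, Z ⊆ D'.ground) ∧ (∀ Z ∈ D''.sets, Z ⊆ D''.ground) ∧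
    D = D'.directSum D''

/-- A set system is even if all its members have cardinalities of equal parity. -/
def SetSystem.IsEven (D : SetSystem U) : Prop :=
  ∀ X ∈ D.sets, ∀ Y ∈ D.sets, (Even X.card ↔ Even Y.card)

/-- A set system is connected if it is not the direct sum of two set systems with
nonempty (disjoint) ground sets. -/
def SetSystem.IsConnected (D : SetSystem U) : Prop :=
  ¬ ∃ D₁ D₂ : SetSystem U, D₁.ground.Nonempty ∧ D₂.ground.Nonempty ∧
      Disjoint D₁.ground D₂.ground ∧
      (∀ Z ∈ D₁.sets, Z ⊆ D₁.ground) ∧ (∀ Z ∈ D₂.sets, Z ⊆ D₂.ground) ∧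
      D = D₁.directSum D₂

/-- The principal submatrix `A[X]` is invertible over GF(2). -/
def PrincInv (A : Matrix V V (ZMod 2)) (X : Finset V) : Prop :=
  IsUnit (A.submatrix (fun i : X => (i : V)) (fun i : X => (i : V))).det

/-- The binary normal delta-matroid `D_H` of a graph `H` with GF(2) adjacency
matrix `A`. -/
def DM (A : Matrix V V (ZMod 2)) : SetSystem V :=
  ⟨Finset.univ, {X | PrincInv A X}⟩

set_option linter.unusedSectionVars false
set_option linter.unusedVariables false
set_option maxHeartbeats 1000000
open Finset


def pivot (A : Matrix V V (ZMod 2)) (v : V) : Matrix V V (ZMod 2) :=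
  fun x y => A x y + A x v * A v y

lemma det_insert_eq {A : Matrix V V (ZMod 2)} {v : V} (hv : A v v = 1)
    {X : Finset V} (hvX : v ∉ X) :
    (A.submatrix (fun i : (insert v X : Finset V) => (i : V))
      (fun i : (insert v X : Finset V) => (i : V))).det
    = ((pivot A v).submatrix (fun i : X => (i : V)) (fun i : X => (i : V))).det := by
  classical
  set s : Finset V := insert v X with hs
  -- the equivalence Unit ⊕ X ≃ s
  let e : (Unit ⊕ {x // x ∈ X}) ≃ {x // x ∈ s} :=
    { toFun := Sum.elim (fun _ => ⟨v, mem_insert_self v X⟩)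
        (fun x => ⟨x, mem_insert_of_mem x.2⟩)
      invFun := fun z => if h : (z : V) ∈ X then Sum.inr ⟨z, h⟩ else Sum.inl ()
      left_inv := by
        rintro (u | ⟨x, hx⟩)
        · simp [hvX]
        · simp [hx]
      right_inv := by
        rintro ⟨z, hz⟩
        rcases Finset.mem_insert.mp hz with h | h
        · subst h; simp [hvX]
        · simp [h] }
  have h1 : (A.submatrix (fun i : s => (i : V)) (fun i : s => (i : V))).det
      = ((A.submatrix (fun i : s => (i : V)) (fun i : s => (i : V))).submatrix e e).det :=
    (Matrix.det_submatrix_equiv_self e _).symm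
  rw [h1]
  have h2 : (A.submatrix (fun i : s => (i : V)) (fun i : s => (i : V))).submatrix e e
      = Matrix.fromBlocks (1 : Matrix Unit Unit (ZMod 2))
          (Matrix.of fun _ (j : {x // x ∈ X}) => A v j)
          (Matrix.of fun (i : {x // x ∈ X}) _ => A i v)
          (A.submatrix (fun i : X => (i : V)) (fun i : X => (i : V))) := by
    ext i j
    rcases i with u | ⟨x, hx⟩ <;> rcases j with u' | ⟨y, hy⟩ <;>
      simp [e, Matrix.fromBlocks, Matrix.one_apply, hv]
  rw [h2, Matrix.det_fromBlocks_one₁₁]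
  congr 1
  ext i j
  rw [Matrix.sub_apply, Matrix.mul_apply]
  simp only [Finset.univ_unique, Finset.sum_singleton, Matrix.of_apply, Matrix.submatrix_apply]
  rw [sub_eq_add_neg, CharTwo.neg_eq]
  rfl


lemma princInv_split {A : Matrix V V (ZMod 2)} {C : Finset V}
    (hcross : ∀ z w, z ∈ C → w ∉ C → A z w = 0 ∧ A w z = 0) (X : Finset V) :
    PrincInv A X ↔ PrincInv A (X ∩ C) ∧ PrincInv A (X \ C) := by
  classical
  have hdisj : Disjoint (X ∩ C) (X \ C) :=
    Finset.disjoint_of_subset_left (Finset.inter_subset_right) disjoint_sdiff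
  let e0 : ({x // x ∈ X ∩ C} ⊕ {x // x ∈ X \ C}) ≃ {x // x ∈ (X ∩ C) ∪ (X \ C)} :=
    Equiv.Finset.union _ _ hdisj
  let e1 : {x // x ∈ (X ∩ C) ∪ (X \ C)} ≃ {x // x ∈ X} :=
    Equiv.subtypeEquivRight (fun x => by
      simp only [Finset.mem_union, Finset.mem_inter, Finset.mem_sdiff]; tauto)
  let e : ({x // x ∈ X ∩ C} ⊕ {x // x ∈ X \ C}) ≃ {x // x ∈ X} := e0.trans e1
  have h1 : (A.submatrix (fun i : X => (i : V)) (fun i : X => (i : V))).det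
      = ((A.submatrix (fun i : X => (i : V)) (fun i : X => (i : V))).submatrix e e).det :=
    (Matrix.det_submatrix_equiv_self e _).symm
  have h2 : (A.submatrix (fun i : X => (i : V)) (fun i : X => (i : V))).submatrix e e
      = Matrix.fromBlocks
          (A.submatrix (fun i : (X ∩ C : Finset V) => (i : V)) (fun i : (X ∩ C : Finset V) => (i : V)))
          0 0
          (A.submatrix (fun i : (X \ C : Finset V) => (i : V)) (fun i : (X \ C : Finset V) => (i : V))) := by
    ext i j
    rcases i with ⟨x, hx⟩ | ⟨x, hx⟩ <;> rcases j with ⟨y, hy⟩ | ⟨y, hy⟩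
    · rfl
    · exact (hcross x y (Finset.mem_inter.mp hx).2 (Finset.mem_sdiff.mp hy).2).1
    · exact (hcross y x (Finset.mem_inter.mp hy).2 (Finset.mem_sdiff.mp hx).2).2
    · rfl
  unfold PrincInv
  rw [h1, h2, Matrix.det_fromBlocks_zero₂₁, IsUnit.mul_iff]

lemma det_eq_zero_of_odd_alt {n : Type*} [Fintype n] [DecidableEq n]
    (M : Matrix n n (ZMod 2)) (hsymm : M.IsSymm) (hdiag : ∀ i, M i i = 0)
    (hodd : Odd (Fintype.card n)) : M.det = 0 := by
  classical
  rw [Matrix.det_apply]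
  have hsgn : ∀ σ : Equiv.Perm n, (Equiv.Perm.sign σ) • (∏ i, M (σ i) i) = ∏ i, M (σ i) i := by
    intro σ
    rcases Int.units_eq_one_or (Equiv.Perm.sign σ) with h | h <;> rw [h] <;>
      simp [CharTwo.neg_eq]
  rw [Finset.sum_congr rfl (fun σ _ => hsgn σ)]
  refine Finset.sum_involution (fun σ _ => σ⁻¹) ?_ ?_ (fun _ _ => Finset.mem_univ _) (fun a _ => by simp)
  · intro σ _
    have : ∏ i, M (σ⁻¹ i) i = ∏ i, M (σ i) i := by
      calc ∏ i, M (σ⁻¹ i) i = ∏ i, M (σ⁻¹ (σ i)) (σ i) := (Equiv.prod_comp σ _).symm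
      _ = ∏ i, M i (σ i) := by simp
      _ = ∏ i, M (σ i) i := by
          refine Finset.prod_congr rfl (fun i _ => ?_)
          exact (hsymm.apply _ _).symm
    rw [this, CharTwo.add_self_eq_zero]
  · intro σ _ hne heq
    -- σ⁻¹ = σ, product nonzero
    have hfix : ∀ i, σ i ≠ i := by
      intro i hi
      apply hne
      refine Finset.prod_eq_zero (Finset.mem_univ i) ?_
      rw [hi]; exact hdiag i
    have heq' : σ⁻¹ = σ := heq
    have hinv : ∀ i, σ (σ i) = i := by
      intro i
      nth_rewrite 1 [← heq']
      simp
    -- even cardinality via pairing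
    have : ((Fintype.card n : ℕ) : ZMod 2) = 0 := by
      rw [Fintype.card_eq_sum_ones]  -- maybe name wrong
      push_cast
      refine Finset.sum_involution (fun i _ => σ i) ?_ ?_ (fun _ _ => Finset.mem_univ _) ?_
      · intro a _; exact CharTwo.add_self_eq_zero 1
      · intro a _ h1; exact fun h => hfix a h
      · intro a _; exact hinv a
    have h2 : (2 : ℕ) ∣ Fintype.card n := by
      rwa [ZMod.natCast_eq_zero_iff] at this
    rw [← Nat.not_even_iff_odd] at hodd
    exact hodd (even_iff_two_dvd.mpr h2)


lemma zmod2_cases (a : ZMod 2) : a = 0 ∨ a = 1 := by revert a; decide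
lemma zmod2_mul_self (a : ZMod 2) : a * a = a := by revert a; decide
lemma zmod2_add_eq_zero {a b : ZMod 2} : a + b = 0 ↔ a = b := by revert a b; decide
lemma zmod2_one_add_ne (a : ZMod 2) : 1 + a ≠ a := by revert a; decide
lemma zmod2_add_eq_one {a b : ZMod 2} (h : a + b = 1) : b ≠ a := by revert a b; decide

lemma pivot_isSymm {A : Matrix V V (ZMod 2)} (hA : A.IsSymm) (v : V) :
    (pivot A v).IsSymm := by
  ext x y
  simp only [pivot, Matrix.transpose_apply]
  rw [hA.apply, hA.apply x v, hA.apply v y]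
  ring

lemma pivot_row_eq_zero {A : Matrix V V (ZMod 2)} {v : V} (hv : A v v = 1) (y : V) :
    pivot A v v y = 0 := by
  simp only [pivot, hv, one_mul]
  exact zmod2_add_eq_zero.mpr rfl

lemma pivot_col_eq_zero {A : Matrix V V (ZMod 2)} {v : V} (hv : A v v = 1) (x : V) :
    pivot A v x v = 0 := by
  simp only [pivot, hv, mul_one]
  exact zmod2_add_eq_zero.mpr rfl

def Adj (A : Matrix V V (ZMod 2)) (x y : V) : Prop := x ≠ y ∧ A x y = 1

def Reach (A : Matrix V V (ZMod 2)) : V → V → Prop := Relation.ReflTransGen (Adj A)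

def IsGood (A : Matrix V V (ZMod 2)) : Prop :=
  ∀ ⦃x y⦄, Adj A x y → ∃ z, Reach A x z ∧ A z z = 1

def fcnt (A : Matrix V V (ZMod 2)) (u : V) : ℕ :=
  (Finset.univ.filter (fun z => z ≠ u ∧ A z z ≠ A z u)).card

lemma isGood_pivot {A : Matrix V V (ZMod 2)} (hA : A.IsSymm) (hgood : IsGood A)
    {v : V} (hv : A v v = 1) (hmax : ∀ u, A u u = 1 → fcnt A u ≤ fcnt A v) :
    IsGood (pivot A v) := by
  intro x y hxy
  by_contra hno
  push_neg at hno
  set B := pivot A v with hB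
  have hBsymm : B.IsSymm := pivot_isSymm hA v
  have hCloop : ∀ z, Reach B x z → B z z = 0 := by
    intro z hz
    rcases zmod2_cases (B z z) with h | h
    · exact h
    · exact absurd h (hno z hz)
  have hCll : ∀ z, Reach B x z → A z z = A z v := by
    intro z hz
    have h0 := hCloop z hz
    have : A z z + A z v * A v z = 0 := h0
    rw [hA.apply z v, zmod2_mul_self] at this
    exact zmod2_add_eq_zero.mp this
  by_cases hbc : ∃ x', Reach B x x' ∧ A x' v = 1
  · -- case b: a loop vertex adjacent to v inside C
    obtain ⟨x', hx'r, hx'v⟩ := hbc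
    have hx'loop : A x' x' = 1 := by rw [hCll x' hx'r, hx'v]
    -- find a B-neighbor y' of x' inside C
    have hnbr : ∃ y', Adj B x' y' ∧ Reach B x y' := by
      rcases Relation.ReflTransGen.cases_tail hx'r with h | ⟨c, hc, hcx'⟩
      · subst h
        exact ⟨y, hxy, Relation.ReflTransGen.single hxy⟩
      · refine ⟨c, ⟨fun h => hcx'.1 h.symm, ?_⟩, hc⟩
        rw [hBsymm.apply c x']
        exact hcx'.2
    obtain ⟨y', hadj, hy'r⟩ := hnbr
    have hy'll : A y' y' = A y' v := hCll y' hy'r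
    set Sv := Finset.univ.filter (fun z => z ≠ v ∧ A z z ≠ A z v) with hSv
    set Sx := Finset.univ.filter (fun z => z ≠ x' ∧ A z z ≠ A z x') with hSx
    have hsub : Sv ⊆ Sx := by
      intro z hz
      rw [hSv, Finset.mem_filter] at hz
      obtain ⟨-, hzv, hzz⟩ := hz
      have hzx' : z ≠ x' := by
        intro h; subst h
        exact hzz (hCll z hx'r)
      have hBzx' : B z x' = 0 := by
        rcases zmod2_cases (B z x') with h | h
        · exact h
        · exfalso
          have hadj2 : Adj B x' z := ⟨fun h' => hzx' h'.symm, by rw [hBsymm.apply z x']; exact h⟩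
          exact hzz (hCll z (hx'r.tail hadj2))
      have : A z x' + A z v * A v x' = 0 := hBzx'
      rw [← hA.apply v x', hx'v, mul_one] at this
      have hzx'v : A z x' = A z v := zmod2_add_eq_zero.mp this
      rw [hSx, Finset.mem_filter]
      exact ⟨Finset.mem_univ _, hzx', by rw [hzx'v]; exact hzz⟩
    have hy'Sx : y' ∈ Sx := by
      rw [hSx, Finset.mem_filter]
      refine ⟨Finset.mem_univ _, fun h => hadj.1 h.symm, ?_⟩
      have h1 : B y' x' = 1 := by rw [hBsymm.apply x' y']; exact hadj.2
      have h2 : A y' x' + A y' v * A v x' = 1 := h1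
      rw [← hA.apply v x', hx'v, mul_one] at h2
      rw [hy'll]
      exact zmod2_add_eq_one h2
    have hy'Sv : y' ∉ Sv := by
      rw [hSv, Finset.mem_filter]
      rintro ⟨-, -, h⟩
      exact h hy'll
    have hlt : fcnt A v < fcnt A x' :=
      Finset.card_lt_card ((Finset.ssubset_iff_of_subset hsub).mpr ⟨y', hy'Sx, hy'Sv⟩)
    exact absurd (hmax x' hx'loop) (Nat.not_le.mpr hlt)
  · -- case a: C is closed in A and loopless
    push_neg at hbc
    have hAv : ∀ z, Reach B x z → A z v = 0 := by
      intro z hz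
      rcases zmod2_cases (A z v) with h | h
      · exact h
      · exact absurd h (hbc z hz)
    have hclosed : ∀ z w, Reach B x z → Adj A z w → Reach B x w := by
      intro z w hz hzw
      have hwv : A z v = 0 := hAv z hz
      have : B z w = A z w + A z v * A v w := rfl
      rw [hzw.2, hwv, zero_mul, add_zero] at this
      exact hz.tail ⟨hzw.1, this⟩
    have hxyA : Adj A x y := by
      refine ⟨hxy.1, ?_⟩
      have : A x y + A x v * A v y = 1 := hxy.2
      rw [hAv x Relation.ReflTransGen.refl, zero_mul, add_zero] at this
      exact this
    obtain ⟨z, hzr, hzloop⟩ := hgood hxyA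
    have key : ∀ w, Relation.ReflTransGen (Adj A) x w → Reach B x w := by
      intro w hw
      induction hw with
      | refl => exact Relation.ReflTransGen.refl
      | tail h₁ h₂ ih => exact hclosed _ _ ih h₂
    have hzC : Reach B x z := key z hzr
    rw [hCll z hzC, hAv z hzC] at hzloop
    exact absurd hzloop (by decide)

lemma princInv_insert_iff {A : Matrix V V (ZMod 2)} {v : V} (hv : A v v = 1)
    {X : Finset V} (hvX : v ∉ X) :
    PrincInv A (insert v X) ↔ PrincInv (pivot A v) X := by
  unfold PrincInv
  rw [det_insert_eq hv hvX]

lemma not_princInv_pivot_of_mem {A : Matrix V V (ZMod 2)} {v : V} (hv : A v v = 1)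
    {X : Finset V} (hvX : v ∈ X) : ¬ PrincInv (pivot A v) X := by
  intro h
  have h' : IsUnit (((pivot A v).submatrix (fun i : X => (i : V)) (fun i : X => (i : V))).det) := h
  have hz : (((pivot A v).submatrix (fun i : X => (i : V)) (fun i : X => (i : V))).det) = 0 :=
    Matrix.det_eq_zero_of_row_eq_zero ⟨v, hvX⟩ (fun j => pivot_row_eq_zero hv _)
  rw [hz] at h'
  exact h'.ne_zero rfl

lemma princInv_empty (A : Matrix V V (ZMod 2)) : PrincInv A ∅ := by
  have : IsEmpty ((∅ : Finset V) : Type _) := by simp; exact ⟨fun x => x.2⟩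
  simp [PrincInv, Matrix.det_isEmpty]

def HasChain (A : Matrix V V (ZMod 2)) : Prop :=
  ∃ σ : List V, σ.Nodup ∧ (∀ i ≤ σ.length, PrincInv A (σ.take i).toFinset) ∧
    PrincInv A σ.toFinset ∧ ∀ Y, PrincInv A Y → σ.toFinset ⊆ Y → Y = σ.toFinset

lemma hasChain_of_zero (A : Matrix V V (ZMod 2)) (h : ∀ x y, A x y = 0) : HasChain A := by
  refine ⟨[], List.nodup_nil, ?_, by simpa using princInv_empty A, ?_⟩
  · intro i hi
    simp only [List.length_nil, Nat.le_zero] at hi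
    subst hi
    simpa using princInv_empty A
  · intro Y hY _
    by_contra hne
    have hYne : Y.Nonempty := by
      rcases Finset.eq_empty_or_nonempty Y with h' | h'
      · exact absurd (by simpa using h') hne
      · exact h'
    obtain ⟨y0, hy0⟩ := hYne
    have h' : IsUnit ((A.submatrix (fun i : Y => (i : V)) (fun i : Y => (i : V))).det) := hY
    have hz : (A.submatrix (fun i : Y => (i : V)) (fun i : Y => (i : V))).det = 0 :=
      Matrix.det_eq_zero_of_row_eq_zero ⟨y0, hy0⟩ (fun j => h _ _)
    rw [hz] at h'
    exact h'.ne_zero rfl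

open Classical in
noncomputable def rowSupp (A : Matrix V V (ZMod 2)) : Finset V :=
  Finset.univ.filter (fun x => ¬ ∀ y, A x y = 0)

open Classical in
lemma hasChain_of_isGood : ∀ (N : ℕ) (A : Matrix V V (ZMod 2)), (rowSupp A).card ≤ N →
    A.IsSymm → IsGood A → HasChain A := by
  intro N
  induction N with
  | zero =>
    intro A hcard hA hgood
    apply hasChain_of_zero
    intro x y
    by_contra hxy
    have hx : x ∈ rowSupp A :=
      Finset.mem_filter.mpr ⟨Finset.mem_univ _, fun hall => hxy (hall y)⟩
    have : (rowSupp A).card = 0 := Nat.le_zero.mp hcard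
    rw [Finset.card_eq_zero] at this
    rw [this] at hx
    exact absurd hx (Finset.notMem_empty x)
  | succ N ih =>
    intro A hcard hA hgood
    by_cases hloop : ∃ v, A v v = 1
    · obtain ⟨v₀, hv₀⟩ := hloop
      obtain ⟨v, hvmem, hmax⟩ := Finset.exists_max_image
        (Finset.univ.filter fun u => A u u = 1) (fcnt A)
        ⟨v₀, Finset.mem_filter.mpr ⟨Finset.mem_univ _, hv₀⟩⟩
      have hv : A v v = 1 := (Finset.mem_filter.mp hvmem).2
      have hmax' : ∀ u, A u u = 1 → fcnt A u ≤ fcnt A v := fun u hu =>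
        hmax u (Finset.mem_filter.mpr ⟨Finset.mem_univ _, hu⟩)
      set B := pivot A v with hB
      have hBsymm : B.IsSymm := pivot_isSymm hA v
      have hBgood : IsGood B := isGood_pivot hA hgood hv hmax'
      have hvsupp : v ∈ rowSupp A :=
        Finset.mem_filter.mpr ⟨Finset.mem_univ _, fun hall => by
          rw [hall v] at hv; exact absurd hv (by decide)⟩
      have hsub : rowSupp B ⊆ (rowSupp A).erase v := by
        intro x hx
        obtain ⟨-, hxr⟩ := Finset.mem_filter.mp hx
        refine Finset.mem_erase.mpr ⟨?_, ?_⟩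
        · rintro rfl
          exact hxr (fun y => pivot_row_eq_zero hv y)
        · refine Finset.mem_filter.mpr ⟨Finset.mem_univ _, fun hall => hxr (fun y => ?_)⟩
          show A x y + A x v * A v y = 0
          rw [hall y, hall v, zero_mul, add_zero]
      have hcard' : (rowSupp B).card ≤ N := by
        have h1 := Finset.card_le_card hsub
        have h2 : ((rowSupp A).erase v).card = (rowSupp A).card - 1 :=
          Finset.card_erase_of_mem hvsupp
        have h3 : 1 ≤ (rowSupp A).card := Finset.card_pos.mpr ⟨v, hvsupp⟩
        omega
      obtain ⟨σ', hnd, hpre, hfeas, hmaxl⟩ := ih B hcard' hBsymm hBgood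
      have hvσ : v ∉ σ'.toFinset := fun hm => not_princInv_pivot_of_mem hv hm hfeas
      refine ⟨v :: σ', ?_, ?_, ?_, ?_⟩
      · exact List.nodup_cons.mpr ⟨fun h => hvσ (List.mem_toFinset.mpr h), hnd⟩
      · intro i hi
        cases i with
        | zero => simpa using princInv_empty A
        | succ j =>
          have hj : j ≤ σ'.length := by simpa using hi
          have ht : ((v :: σ').take (j+1)).toFinset = insert v ((σ'.take j).toFinset) := by
            simp [List.take_succ_cons]
          rw [ht]
          have hvj : v ∉ (σ'.take j).toFinset := fun hm =>
            hvσ (List.mem_toFinset.mpr (List.take_subset _ _ (List.mem_toFinset.mp hm)))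
          exact (princInv_insert_iff hv hvj).mpr (hpre j hj)
      · rw [show (v :: σ').toFinset = insert v σ'.toFinset from by simp]
        exact (princInv_insert_iff hv (by simpa using hvσ)).mpr hfeas
      · intro Y hY hsubY
        have hvY : v ∈ Y := hsubY (by simp)
        have hvnot : v ∉ Y.erase v := Finset.notMem_erase v Y
        have hYv : Y = insert v (Y.erase v) := (Finset.insert_erase hvY).symm
        have hBY : PrincInv B (Y.erase v) :=
          (princInv_insert_iff hv hvnot).mp (by rw [← hYv]; exact hY)
        have hsub' : σ'.toFinset ⊆ Y.erase v := by
          intro a ha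
          refine Finset.mem_erase.mpr ⟨fun h => hvσ (h ▸ ha), hsubY ?_⟩
          simp only [List.toFinset_cons, Finset.mem_insert]
          exact Or.inr ha
        have heq := hmaxl _ hBY hsub'
        rw [hYv, heq]
        simp
    · apply hasChain_of_zero
      intro x y
      rcases eq_or_ne x y with rfl | hne
      · rcases zmod2_cases (A x x) with h | h
        · exact h
        · exact absurd ⟨x, h⟩ hloop
      · rcases zmod2_cases (A x y) with h | h
        · exact h
        · obtain ⟨z, -, hz⟩ := hgood ⟨hne, h⟩
          exact absurd ⟨z, hz⟩ hloop


lemma loop_of_princInv_singleton {A : Matrix V V (ZMod 2)} {u : V}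
    (h : PrincInv A {u}) : A u u = 1 := by
  haveI : Unique (({u} : Finset V) : Type _) :=
    ⟨⟨⟨u, Finset.mem_singleton_self u⟩⟩, by
      rintro ⟨x, hx⟩
      simp [Finset.mem_singleton.mp hx]⟩
  have h' : IsUnit ((A.submatrix (fun i : ({u} : Finset V) => (i : V))
      (fun i : ({u} : Finset V) => (i : V))).det) := h
  rw [Matrix.det_unique] at h'
  have hd : ((default : (({u} : Finset V) : Type _)) : V) = u := by
    exact Finset.mem_singleton.mp (default : (({u} : Finset V) : Type _)).2
  have : A u u ≠ 0 := by
    intro h0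
    rw [Matrix.submatrix_apply, hd, h0] at h'
    exact h'.ne_zero rfl
  rcases (by revert this; generalize A u u = a; revert a; decide :
    A u u = 1) with h1
  exact h1

lemma princInv_pair {A : Matrix V V (ZMod 2)} {u w : V} (hne : u ≠ w)
    (huu : A u u = 0) (hww : A w w = 0) (huw : A u w = 1) (hwu : A w u = 1) :
    PrincInv A ({u, w}) := by
  classical
  set s : Finset V := {u, w} with hs
  have hu : u ∈ s := by simp [hs]
  have hw : w ∈ s := by simp [hs]
  let e : Fin 2 ≃ {x // x ∈ s} := by
    refine Equiv.ofBijective (fun i => if i = 0 then ⟨u, hu⟩ else ⟨w, hw⟩) ⟨?_, ?_⟩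
    · intro i j hij
      fin_cases i <;> fin_cases j <;> simp_all <;> exact absurd (Subtype.ext_iff.mp hij) hne
    · rintro ⟨z, hz⟩
      rcases Finset.mem_insert.mp hz with h | h
      · exact ⟨0, by simp [h]⟩
      · exact ⟨1, by simp [Finset.mem_singleton.mp h]⟩
  have h1 : (A.submatrix (fun i : s => (i : V)) (fun i : s => (i : V))).det
      = ((A.submatrix (fun i : s => (i : V)) (fun i : s => (i : V))).submatrix e e).det :=
    (Matrix.det_submatrix_equiv_self e _).symm
  unfold PrincInv
  rw [h1, Matrix.det_fin_two]
  simp only [Matrix.submatrix_apply]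
  show IsUnit (A u u * A w w - A u w * A w u)
  rw [huu, hww, huw, hwu]
  simp


lemma even_card_of_princInv_loopless {A : Matrix V V (ZMod 2)} (hA : A.IsSymm)
    {X : Finset V} (hdiag : ∀ x ∈ X, A x x = 0) (h : PrincInv A X) : Even X.card := by
  by_contra hodd
  rw [Nat.not_even_iff_odd] at hodd
  have hM : (A.submatrix (fun i : X => (i : V)) (fun i : X => (i : V))).IsSymm := by
    ext i j
    exact hA.apply _ _
  have hz := det_eq_zero_of_odd_alt _ hM (fun i => hdiag i i.2) (by rwa [Fintype.card_coe])
  have h' : IsUnit ((A.submatrix (fun i : X => (i : V)) (fun i : X => (i : V))).det) := h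
  rw [hz] at h'
  exact h'.ne_zero rfl

lemma cross_edge {A : Matrix V V (ZMod 2)} {x : V} {C : Finset V}
    (hC : ∀ z, z ∈ C ↔ Reach A x z)
    (hclosed : ∀ z w, z ∈ C → Adj A z w → w ∈ C)
    {g₁ g₂ : Finset V} (hcover : ∀ z ∈ C, z ∈ g₁ ∪ g₂) (hdisj : Disjoint g₁ g₂)
    (hx : x ∈ g₁) {b : V} (hb : b ∈ g₂) (hbC : b ∈ C) :
    ∃ u w, u ∈ C ∧ w ∈ C ∧ Adj A u w ∧ u ∈ g₁ ∧ w ∈ g₂ := by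
  have key : ∀ q, Reach A x q →
      (q ∈ g₁ ∨ ∃ u w, u ∈ C ∧ w ∈ C ∧ Adj A u w ∧ u ∈ g₁ ∧ w ∈ g₂) := by
    intro q hq
    induction hq with
    | refl => exact Or.inl hx
    | @tail p q' hreach hadj ih =>
      rcases ih with h | h
      · have hpC : p ∈ C := (hC _).mpr hreach
        have hq'C : q' ∈ C := hclosed _ _ hpC hadj
        rcases Finset.mem_union.mp (hcover _ hq'C) with h1 | h2
        · exact Or.inl h1
        · exact Or.inr ⟨_, _, hpC, hq'C, hadj, h, h2⟩
      · exact Or.inr h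
  rcases key b ((hC b).mp hbC) with h | h
  · exact absurd hb (Finset.disjoint_left.mp hdisj h)
  · exact h


/-- For the binary normal delta-matroid `D = D_H` of a graph `H` (loops allowed):
there exists a full lc-sequence for `D` (a sequence `(v₁,…,v_k)` of mutually
distinct elements all of whose initial segments `{v₁,…,v_i}` belong to `S`, with
`{v₁,…,v_k}` a maximal member of `S`) iff every even connected summand of `D`
with nonempty ground set is of the form `({v}, {∅})`. -/
theorem full_lcSeq_iff_even_connected_summands (A : Matrix V V (ZMod 2))
    (hA : A.IsSymm) :
    (∃ σ : List V, σ.Nodup ∧ (∀ i ≤ σ.length, (σ.take i).toFinset ∈ (DM A).sets) ∧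
      σ.toFinset ∈ (DM A).sets ∧
      ∀ Y ∈ (DM A).sets, σ.toFinset ⊆ Y → Y = σ.toFinset) ↔
    (∀ D' : SetSystem V, D'.Summand (DM A) → D'.IsConnected → D'.IsEven →
      D'.ground.Nonempty → ∃ v : V, D'.ground = {v} ∧ D'.sets = {∅}) := by
  constructor
  · rintro ⟨σ, hnd, hpre, hfeas, hmaxl⟩ D' hsummand hconn heven hne
    obtain ⟨D'', hdisj, hb', hb'', heq⟩ := hsummand
    have hground : (Finset.univ : Finset V) = D'.ground ∪ D''.ground :=
      congrArg SetSystem.ground heq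
    have hsets : ({X : Finset V | PrincInv A X})
        = {Z | ∃ X₁ ∈ D'.sets, ∃ X₂ ∈ D''.sets, Z = X₁ ∪ X₂} :=
      congrArg SetSystem.sets heq
    have hchar : ∀ X : Finset V, PrincInv A X ↔
        (X ∩ D'.ground ∈ D'.sets ∧ X ∩ D''.ground ∈ D''.sets) := by
      intro X
      constructor
      · intro hX
        have hX' : X ∈ {Z | ∃ X₁ ∈ D'.sets, ∃ X₂ ∈ D''.sets, Z = X₁ ∪ X₂} := hsets ▸ hX
        obtain ⟨X₁, h₁, X₂, h₂, rfl⟩ := hX'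
        have e₁ : (X₁ ∪ X₂) ∩ D'.ground = X₁ := by
          apply Finset.Subset.antisymm
          · intro a ha
            rcases Finset.mem_inter.mp ha with ⟨ha1, ha2⟩
            rcases Finset.mem_union.mp ha1 with h | h
            · exact h
            · exact absurd ha2 (Finset.disjoint_right.mp hdisj (hb'' _ h₂ h))
          · intro a ha
            exact Finset.mem_inter.mpr ⟨Finset.mem_union_left _ ha, hb' _ h₁ ha⟩
        have e₂ : (X₁ ∪ X₂) ∩ D''.ground = X₂ := by
          apply Finset.Subset.antisymm
          · intro a ha
            rcases Finset.mem_inter.mp ha with ⟨ha1, ha2⟩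
            rcases Finset.mem_union.mp ha1 with h | h
            · exact absurd ha2 (Finset.disjoint_left.mp hdisj (hb' _ h₁ h))
            · exact h
          · intro a ha
            exact Finset.mem_inter.mpr ⟨Finset.mem_union_right _ ha, hb'' _ h₂ ha⟩
        rw [e₁, e₂]; exact ⟨h₁, h₂⟩
      · rintro ⟨h₁, h₂⟩
        have hXeq : X = (X ∩ D'.ground) ∪ (X ∩ D''.ground) := by
          ext a
          simp only [Finset.mem_union, Finset.mem_inter]
          constructor
          · intro ha
            have : a ∈ D'.ground ∪ D''.ground := hground ▸ Finset.mem_univ a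
            rcases Finset.mem_union.mp this with h | h
            · exact Or.inl ⟨ha, h⟩
            · exact Or.inr ⟨ha, h⟩
          · rintro (⟨h, -⟩ | ⟨h, -⟩) <;> exact h
        show PrincInv A X
        have hXm : X ∈ {Z | ∃ X₁ ∈ D'.sets, ∃ X₂ ∈ D''.sets, Z = X₁ ∪ X₂} :=
          ⟨_, h₁, _, h₂, hXeq⟩
        rw [← hsets] at hXm
        exact hXm
    have hempties := (hchar ∅).mp (princInv_empty A)
    have hempty' : (∅ : Finset V) ∈ D'.sets := by
      have := hempties.1; rwa [Finset.empty_inter] at this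
    have hempty'' : (∅ : Finset V) ∈ D''.sets := by
      have := hempties.2; rwa [Finset.empty_inter] at this
    have hevenS : ∀ T ∈ D'.sets, Even T.card := by
      intro T hT
      have := heven T hT ∅ hempty'
      simpa using this
    have hpre' : ∀ i ≤ σ.length, PrincInv A (σ.take i).toFinset := hpre
    have htrace : ∀ i ≤ σ.length, (σ.take i).toFinset ∩ D'.ground = ∅ := by
      intro i
      induction i with
      | zero => intro _; simp
      | succ j ihj =>
        intro hj
        have hj' : j ≤ σ.length := Nat.le_of_succ_le hj
        have hjlt : j < σ.length := hj
        have hT : (σ.take (j+1)).toFinset ∩ D'.ground ∈ D'.sets :=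
          ((hchar _).mp (hpre' _ hj)).1
        have hsubs : (σ.take (j+1)).toFinset ∩ D'.ground ⊆ {σ.get ⟨j, hjlt⟩} := by
          intro a ha
          have ha1 := (Finset.mem_inter.mp ha).1
          have ha2 := (Finset.mem_inter.mp ha).2
          rw [List.mem_toFinset] at ha1
          have hts : σ.take (j+1) = σ.take j ++ [σ.get ⟨j, hjlt⟩] := by
            rw [List.take_succ]
            congr 1
            rw [List.getElem?_eq_getElem hjlt]
            rfl
          rw [hts, List.mem_append] at ha1
          rcases ha1 with h | h
          · exfalso
            have hmem : a ∈ (σ.take j).toFinset ∩ D'.ground :=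
              Finset.mem_inter.mpr ⟨List.mem_toFinset.mpr h, ha2⟩
            rw [ihj hj'] at hmem
            exact absurd hmem (Finset.notMem_empty a)
          · simpa using h
        have hcard : ((σ.take (j+1)).toFinset ∩ D'.ground).card ≤ 1 := by
          calc ((σ.take (j+1)).toFinset ∩ D'.ground).card
              ≤ ({σ.get ⟨j, hjlt⟩} : Finset V).card := Finset.card_le_card hsubs
          _ = 1 := Finset.card_singleton _
        have hevT := hevenS _ hT
        have hzero : ((σ.take (j+1)).toFinset ∩ D'.ground).card = 0 := by
          rcases Nat.lt_or_ge ((σ.take (j+1)).toFinset ∩ D'.ground).card 1 with h | h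
          · omega
          · have h1 : ((σ.take (j+1)).toFinset ∩ D'.ground).card = 1 := le_antisymm hcard h
            rw [h1] at hevT
            exact absurd hevT (by decide)
        exact Finset.card_eq_zero.mp hzero
    have hfinal : σ.toFinset ∩ D'.ground = ∅ := by
      have := htrace σ.length le_rfl
      rwa [List.take_length] at this
    have hS' : D'.sets = {∅} := by
      apply Set.eq_singleton_iff_unique_mem.mpr
      refine ⟨hempty', ?_⟩
      intro T hT
      have hTg : T ⊆ D'.ground := hb' _ hT
      have hY1 : (σ.toFinset ∪ T) ∩ D'.ground = T := by
        rw [Finset.union_inter_distrib_right, hfinal, Finset.empty_union]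
        exact Finset.inter_eq_left.mpr hTg
      have hY2 : (σ.toFinset ∪ T) ∩ D''.ground = σ.toFinset ∩ D''.ground := by
        rw [Finset.union_inter_distrib_right]
        have hTe : T ∩ D''.ground = ∅ := by
          rw [Finset.eq_empty_iff_forall_notMem]
          intro a ha
          rcases Finset.mem_inter.mp ha with ⟨h1, h2⟩
          exact (Finset.disjoint_left.mp hdisj (hTg h1)) h2
        rw [hTe, Finset.union_empty]
      have hYfeas : PrincInv A (σ.toFinset ∪ T) := by
        apply (hchar _).mpr
        constructor
        · rw [hY1]; exact hT
        · rw [hY2]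
          exact ((hchar _).mp hfeas).2
      have hYeq := hmaxl _ hYfeas Finset.subset_union_left
      have hTsub : T ⊆ σ.toFinset := by
        rw [← hYeq]
        exact Finset.subset_union_right
      have hTsub2 : T ⊆ (∅ : Finset V) := by
        rw [← hfinal]
        exact Finset.subset_inter hTsub hTg
      exact Finset.subset_empty.mp hTsub2
    obtain ⟨v, hvg⟩ := hne
    refine ⟨v, ?_, hS'⟩
    by_contra hgne
    have hexw : ∃ w ∈ D'.ground, w ≠ v := by
      by_contra hall
      push_neg at hall
      exact hgne (Finset.eq_singleton_iff_unique_mem.mpr ⟨hvg, fun w hw => hall w hw⟩)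
    obtain ⟨w, hwg, hwv⟩ := hexw
    apply hconn
    refine ⟨⟨{v}, {∅}⟩, ⟨D'.ground.erase v, {∅}⟩, ⟨v, Finset.mem_singleton_self v⟩,
      ⟨w, Finset.mem_erase.mpr ⟨hwv, hwg⟩⟩, ?_, ?_, ?_, ?_⟩
    · simp [Finset.disjoint_left]
    · rintro Z hZ; rw [Set.mem_singleton_iff.mp hZ]; exact Finset.empty_subset _
    · rintro Z hZ; rw [Set.mem_singleton_iff.mp hZ]; exact Finset.empty_subset _
    · unfold SetSystem.directSum
      have hgr : D'.ground = {v} ∪ D'.ground.erase v := by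
        rw [show ({v} ∪ D'.ground.erase v : Finset V) = insert v (D'.ground.erase v) from rfl,
          Finset.insert_erase hvg]
      have hst : D'.sets = {Z : Finset V | ∃ X₁ ∈ ({∅} : Set (Finset V)),
          ∃ X₂ ∈ ({∅} : Set (Finset V)), Z = X₁ ∪ X₂} := by
        rw [hS']
        ext Z
        simp
      calc D' = ⟨D'.ground, D'.sets⟩ := rfl
      _ = _ := by rw [hgr] at *; rw [hst] at *; exact (congrArg₂ SetSystem.mk hgr hst)
  · intro hRHS
    have hgood : IsGood A := by
      by_contra hbad
      rw [IsGood] at hbad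
      push_neg at hbad
      obtain ⟨x, y, hxy, hnoz⟩ := hbad
      classical
      set C : Finset V := Finset.univ.filter (fun z => Reach A x z) with hCdef
      have hCmem : ∀ z, z ∈ C ↔ Reach A x z := by
        intro z; rw [hCdef, Finset.mem_filter]; simp
      have hxC : x ∈ C := (hCmem x).mpr Relation.ReflTransGen.refl
      have hyC : y ∈ C := (hCmem y).mpr (Relation.ReflTransGen.single hxy)
      have hloopless : ∀ z ∈ C, A z z = 0 := by
        intro z hz
        rcases zmod2_cases (A z z) with h | h
        · exact h
        · exact absurd h (hnoz z ((hCmem z).mp hz))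
      have hclosed : ∀ z w, z ∈ C → Adj A z w → w ∈ C := by
        intro z w hz hzw
        exact (hCmem w).mpr (((hCmem z).mp hz).tail hzw)
      have hcross : ∀ z w, z ∈ C → w ∉ C → A z w = 0 ∧ A w z = 0 := by
        intro z w hz hw
        have hzw : A z w = 0 := by
          rcases zmod2_cases (A z w) with h | h
          · exact h
          · exfalso
            have hnezw : z ≠ w := fun h' => hw (h' ▸ hz)
            exact hw (hclosed z w hz ⟨hnezw, h⟩)
        refine ⟨hzw, ?_⟩
        rw [hA.apply z w]
        exact hzw
      have hsummand : (⟨C, {X : Finset V | X ⊆ C ∧ PrincInv A X}⟩ : SetSystem V).Summand (DM A) := by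
        refine ⟨⟨Cᶜ, {X : Finset V | X ⊆ Cᶜ ∧ PrincInv A X}⟩, ?_, ?_, ?_, ?_⟩
        · exact disjoint_compl_right
        · rintro Z ⟨h1, -⟩; exact h1
        · rintro Z ⟨h1, -⟩; exact h1
        · unfold DM SetSystem.directSum
          refine congrArg₂ SetSystem.mk ?_ ?_
          · exact (Finset.union_compl C).symm
          · ext X
            simp only [Set.mem_setOf_eq]
            constructor
            · intro hX
              refine ⟨X ∩ C, ⟨Finset.inter_subset_right, ?_⟩, X \ C, ⟨?_, ?_⟩, ?_⟩
              · exact ((princInv_split hcross X).mp hX).1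
              · intro a ha; rw [Finset.mem_compl]; exact (Finset.mem_sdiff.mp ha).2
              · exact ((princInv_split hcross X).mp hX).2
              · ext a
                simp only [Finset.mem_union, Finset.mem_inter, Finset.mem_sdiff]
                tauto
            · rintro ⟨X₁, ⟨hX₁C, hX₁⟩, X₂, ⟨hX₂C, hX₂⟩, rfl⟩
              apply (princInv_split hcross _).mpr
              have e₁ : (X₁ ∪ X₂) ∩ C = X₁ := by
                ext a
                simp only [Finset.mem_inter, Finset.mem_union]
                constructor
                · rintro ⟨h1 | h2, hCm⟩
                  · exact h1
                  · exact absurd hCm (Finset.mem_compl.mp (hX₂C h2))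
                · intro h; exact ⟨Or.inl h, hX₁C h⟩
              have e₂ : (X₁ ∪ X₂) \ C = X₂ := by
                ext a
                simp only [Finset.mem_sdiff, Finset.mem_union]
                constructor
                · rintro ⟨h1 | h2, hCm⟩
                  · exact absurd (hX₁C h1) hCm
                  · exact h2
                · intro h; exact ⟨Or.inr h, Finset.mem_compl.mp (hX₂C h)⟩
              rw [e₁, e₂]
              exact ⟨hX₁, hX₂⟩
      have hconn : (⟨C, {X : Finset V | X ⊆ C ∧ PrincInv A X}⟩ : SetSystem V).IsConnected := by
        rintro ⟨E₁, E₂, hn₁, hn₂, hdisjE, hbE₁, hbE₂, heqE⟩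
        have hgE : C = E₁.ground ∪ E₂.ground := congrArg SetSystem.ground heqE
        have hsE : ({X : Finset V | X ⊆ C ∧ PrincInv A X})
            = {Z | ∃ X₁ ∈ E₁.sets, ∃ X₂ ∈ E₂.sets, Z = X₁ ∪ X₂} :=
          congrArg SetSystem.sets heqE
        have hxcov : x ∈ E₁.ground ∪ E₂.ground := hgE ▸ hxC
        have main : ∀ (g₁ g₂ : Finset V) (S₁ S₂ : Set (Finset V)),
            C = g₁ ∪ g₂ → Disjoint g₁ g₂ → (∀ Z ∈ S₁, Z ⊆ g₁) → (∀ Z ∈ S₂, Z ⊆ g₂) →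
            ({X : Finset V | X ⊆ C ∧ PrincInv A X})
              = {Z | ∃ X₁ ∈ S₁, ∃ X₂ ∈ S₂, Z = X₁ ∪ X₂} →
            x ∈ g₁ → g₂.Nonempty → False := by
          intro g₁ g₂ S₁ S₂ hg hdisjg hb₁ hb₂ hs hxg hn
          obtain ⟨b, hbg⟩ := hn
          have hbC : b ∈ C := by rw [hg]; exact Finset.mem_union_right _ hbg
          obtain ⟨u, w, huC, hwC, hadj, hug, hwg⟩ :=
            cross_edge hCmem hclosed (fun z hz => by rw [← hg]; exact hz) hdisjg hxg hbg hbC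
          have hpair : PrincInv A ({u, w} : Finset V) :=
            princInv_pair hadj.1 (hloopless u huC) (hloopless w hwC) hadj.2
              (by rw [hA.apply u w]; exact hadj.2)
          have hpairC : ({u, w} : Finset V) ⊆ C := by
            intro a ha
            rcases Finset.mem_insert.mp ha with h | h
            · exact h ▸ huC
            · exact (Finset.mem_singleton.mp h) ▸ hwC
          have hmem : ({u, w} : Finset V) ∈ {Z | ∃ X₁ ∈ S₁, ∃ X₂ ∈ S₂, Z = X₁ ∪ X₂} := by
            rw [← hs]; exact ⟨hpairC, hpair⟩
          obtain ⟨X₁, hX₁, X₂, hX₂, hun⟩ := hmem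
          have hunotg₂ : u ∉ g₂ := Finset.disjoint_left.mp hdisjg hug
          have hwnotg₁ : w ∉ g₁ := Finset.disjoint_right.mp hdisjg hwg
          have huX₁ : u ∈ X₁ := by
            have humem : u ∈ X₁ ∪ X₂ := by rw [← hun]; simp
            rcases Finset.mem_union.mp humem with h | h
            · exact h
            · exact absurd (hb₂ _ hX₂ h) hunotg₂
          have hX₁u : X₁ = {u} := by
            apply Finset.eq_singleton_iff_unique_mem.mpr
            refine ⟨huX₁, fun a ha => ?_⟩
            have haU : a ∈ ({u, w} : Finset V) := by
              rw [hun]; exact Finset.mem_union_left _ ha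
            rcases Finset.mem_insert.mp haU with h | h
            · exact h
            · exfalso
              rw [Finset.mem_singleton.mp h] at ha
              exact hwnotg₁ (hb₁ _ hX₁ ha)
          have hememp : (∅ : Finset V) ∈ {Z | ∃ X₁ ∈ S₁, ∃ X₂ ∈ S₂, Z = X₁ ∪ X₂} := by
            rw [← hs]; exact ⟨Finset.empty_subset _, princInv_empty A⟩
          obtain ⟨E₁', hE₁', E₂', hE₂', hEun⟩ := hememp
          have hE₂'e : E₂' = ∅ := (Finset.union_eq_empty.mp hEun.symm).2
          have hu1 : ({u} : Finset V) ∈ {Z | ∃ X₁ ∈ S₁, ∃ X₂ ∈ S₂, Z = X₁ ∪ X₂} := by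
            refine ⟨{u}, hX₁u ▸ hX₁, E₂', hE₂', ?_⟩
            rw [hE₂'e, Finset.union_empty]
          rw [← hs] at hu1
          have hloopu := loop_of_princInv_singleton hu1.2
          rw [hloopless u huC] at hloopu
          exact absurd hloopu (by decide)
        rcases Finset.mem_union.mp hxcov with hx1 | hx2
        · exact main E₁.ground E₂.ground E₁.sets E₂.sets hgE hdisjE hbE₁ hbE₂ hsE hx1 hn₂
        · refine main E₂.ground E₁.ground E₂.sets E₁.sets ?_ hdisjE.symm hbE₂ hbE₁ ?_ hx2 hn₁
          · rw [hgE, Finset.union_comm]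
          · rw [hsE]
            ext Z
            constructor
            · rintro ⟨X₁, h₁, X₂, h₂, rfl⟩
              exact ⟨X₂, h₂, X₁, h₁, Finset.union_comm _ _⟩
            · rintro ⟨X₁, h₁, X₂, h₂, rfl⟩
              exact ⟨X₂, h₂, X₁, h₁, Finset.union_comm _ _⟩
      have hevenD : (⟨C, {X : Finset V | X ⊆ C ∧ PrincInv A X}⟩ : SetSystem V).IsEven := by
        intro X hX Y hY
        have hX' := even_card_of_princInv_loopless hA (fun a ha => hloopless a (hX.1 ha)) hX.2
        have hY' := even_card_of_princInv_loopless hA (fun a ha => hloopless a (hY.1 ha)) hY.2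
        exact iff_of_true hX' hY'
      obtain ⟨v, hgv, -⟩ := hRHS _ hsummand hconn hevenD ⟨x, hxC⟩
      have hxv : x ∈ ({v} : Finset V) := by rw [← hgv]; exact hxC
      have hyv : y ∈ ({v} : Finset V) := by rw [← hgv]; exact hyC
      exact hxy.1 ((Finset.mem_singleton.mp hxv).trans (Finset.mem_singleton.mp hyv).symm)
    obtain ⟨σ, hnd, hpre, hfeas, hmaxl⟩ :=
      hasChain_of_isGood (rowSupp A).card A le_rfl hA hgood
    exact ⟨σ, hnd, hpre, hfeas, fun Y hY => hmaxl Y hY⟩
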